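/- Let λ_m > 0, λ_r > 0, μ_m ≠ 0, and let ρ, δ, p, p_c, θ, ω, μ_r, S, T be real numbers. Define Δ = (4·p_c·θ·ω·μ_m·S - 4·λ_m·δ - 2·λ_m·ρ)² - 16·(μ_m·p_c·θ·ω·S)², assume Δ ≥ 0 and 2·λ_m·ρ + √Δ > 0, and set A = (4·λ_m·δ + 2·λ_m·ρ - 4·p_c·θ·ω·μ_m·S - √Δ)/(8·μ_m²). Then the unique real number B satisfying ρ·B = (p - p_c)·θ·S + (B·p_c·θ·ω·μ_m·S + 2·A·B·μ_m²)/λ_m + 2·A·μ_r²·T/λ_r - B·δ is B = 4·λ_m·(λ_r·(p - p_c)·θ·S + 2·A·μ_r²·T)/(λ_r·(2·λ_m·ρ + √Δ)). -/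

import Mathlib

/-- In the decentralized model, the linear coefficient `B` of the manufacturer's
value function is uniquely determined:
`B = 4λ_m(λ_r(p - p_c)θS + 2Aμ_r²T)/(λ_r(2λ_m ρ + √Δ))`. -/
theorem stmt_14 (lm lr mum rho del p pc th om mur S T Del A : ℝ)
    (hlm : 0 < lm) (hlr : 0 < lr) (hmum : mum ≠ 0)
    (hDel : Del = (4 * pc * th * om * mum * S - 4 * lm * del - 2 * lm * rho) ^ 2
      - 16 * (mum * pc * th * om * S) ^ 2)
    (hDelpos : 0 ≤ Del)
    (hpos : 0 < 2 * lm * rho + Real.sqrt Del)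
    (hA : A = (4 * lm * del + 2 * lm * rho - 4 * pc * th * om * mum * S - Real.sqrt Del) /
      (8 * mum ^ 2)) :
    ∀ B : ℝ,
      (rho * B = (p - pc) * th * S + (B * pc * th * om * mum * S + 2 * A * B * mum ^ 2) / lm
        + 2 * A * mur ^ 2 * T / lr - B * del) ↔
      B = 4 * lm * (lr * (p - pc) * th * S + 2 * A * mur ^ 2 * T) /
        (lr * (2 * lm * rho + Real.sqrt Del)) := by
  intro B
  set s := Real.sqrt Del with hs
  have hlm' : lm ≠ 0 := ne_of_gt hlm
  have hlr' : lr ≠ 0 := ne_of_gt hlr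
  have hden : 2 * lm * rho + s ≠ 0 := ne_of_gt hpos
  have hmum2 : mum ^ 2 ≠ 0 := pow_ne_zero 2 hmum
  subst hA
  rw [eq_div_iff (mul_ne_zero hlr' hden)]
  constructor
  · intro h
    field_simp at h
    field_simp
    apply mul_left_cancel₀ (show (2:ℝ) * mum ^ 2 ≠ 0 by positivity)
    linear_combination 8 * mum ^ 2 * h
  · intro h
    field_simp at h
    field_simp
    linear_combination h / 4
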